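/- arXiv:2105.05127 — 3 statements merged into one kernel-verified Lean document; each statement's English description precedes it below -/
import Mathlib

section
/- Let d ≥ 1 and let K ⊆ ℝ^d be a nonempty compact convex set such that for every x = (x_1,…,x_d) ∈ K one has max_{1≤i≤d} x_i > 0. Then there exist strictly positive real numbers α_1,…,α_d and κ > 0 such that for every x ∈ K, Σ_{i=1}^d α_i x_i ≥ κ. -/
open Finset

/-- Finite-dimensional minimax/weight-selection principle: if `K ⊆ ℝ^d` is a nonempty
compact convex set on which `max_i x_i > 0`, then there are strictly positive weights
`α_i` and `κ > 0` with `∑ i, α_i x_i ≥ κ` on `K`. -/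
theorem stmt_0 (d : ℕ) (hd : 1 ≤ d) (K : Set (Fin d → ℝ))
    (hne : K.Nonempty) (hcpt : IsCompact K) (hconv : Convex ℝ K)
    (hpos : ∀ x ∈ K, ∃ i, 0 < x i) :
    ∃ α : Fin d → ℝ, (∀ i, 0 < α i) ∧ ∃ κ : ℝ, 0 < κ ∧
      ∀ x ∈ K, κ ≤ ∑ i, α i * x i := by
  classical
  set C : Set (Fin d → ℝ) := {x | ∀ i, x i ≤ 0} with hCdef
  have hCeq : C = Set.pi Set.univ fun _ => Set.Iic (0:ℝ) := by
    ext x; simp [hCdef, Set.mem_pi, Pi.le_def]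
  have hCconv : Convex ℝ C := by
    rw [hCeq]; exact convex_pi fun i _ => convex_Iic 0
  have hCclosed : IsClosed C := by
    rw [hCeq]; exact isClosed_set_pi fun i _ => isClosed_Iic
  have hdisj : Disjoint K C := by
    rw [Set.disjoint_left]
    intro x hxK hxC
    obtain ⟨i, hi⟩ := hpos x hxK
    exact absurd (hxC i) (not_le.2 hi)
  obtain ⟨f, u, v, hfu, huv, hvf⟩ :=
    geometric_hahn_banach_compact_closed hconv hcpt hCconv hCclosed hdisj
  have hv0 : v < 0 := by
    have h0 : (0 : Fin d → ℝ) ∈ C := fun i => le_refl 0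
    have := hvf 0 h0
    simpa using this
  set c : Fin d → ℝ := fun i => f (Pi.single i 1) with hc
  have hrep : ∀ x : Fin d → ℝ, f x = ∑ i, x i * c i := by
    intro x
    have hx : x = ∑ i, x i • (Pi.single i 1 : Fin d → ℝ) := by
      funext j
      simp [Finset.sum_apply, Pi.single_apply]
    conv_lhs => rw [hx]
    simp [map_sum, map_smul, smul_eq_mul, hc]
  have hcnonpos : ∀ i, c i ≤ 0 := by
    intro i
    by_contra h
    push_neg at h
    have hne0 : c i ≠ 0 := ne_of_gt h
    have hmem : (v / c i) • (Pi.single i 1 : Fin d → ℝ) ∈ C := by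
      intro j
      by_cases hj : j = i
      · subst hj
        simp [Pi.single_apply]
        exact div_nonpos_of_nonpos_of_nonneg hv0.le h.le
      · simp [Pi.single_apply, hj]
    have hlt := hvf _ hmem
    rw [map_smul, smul_eq_mul] at hlt
    have : f (Pi.single i (1:ℝ)) = c i := rfl
    rw [this, div_mul_cancel₀ v hne0] at hlt
    exact lt_irrefl v hlt
  -- on K, ∑ (-c i) * x i ≥ -v > 0
  have hK0 : ∀ x ∈ K, -v ≤ ∑ i, (-c i) * x i := by
    intro x hx
    have h1 : f x < v := lt_trans (hfu x hx) huv
    rw [hrep] at h1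
    have : ∑ i, (-c i) * x i = -∑ i, x i * c i := by
      rw [← Finset.sum_neg_distrib]
      exact Finset.sum_congr rfl fun i _ => by ring
    rw [this]
    linarith
  -- bound on K
  obtain ⟨r, hr⟩ := hcpt.isBounded.subset_closedBall 0
  have hbound : ∀ x ∈ K, ∀ i, |x i| ≤ r := by
    intro x hx i
    have hxr : ‖x‖ ≤ r := by
      have := hr hx
      rwa [Metric.mem_closedBall, dist_zero_right] at this
    calc |x i| = ‖x i‖ := rfl
      _ ≤ ‖x‖ := norm_le_pi_norm x i
      _ ≤ r := hxr
  have hr0 : 0 ≤ r := by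
    obtain ⟨x, hx⟩ := hne
    have := hbound x hx ⟨0, hd⟩
    exact le_trans (abs_nonneg _) this
  set D : ℝ := (d : ℝ) * r with hD
  have hD0 : 0 ≤ D := mul_nonneg (Nat.cast_nonneg d) hr0
  set ε : ℝ := (-v) / (2 * (D + 1)) with hε
  have hεpos : 0 < ε := div_pos (by linarith) (by linarith)
  refine ⟨fun i => -c i + ε, fun i => by
    have := hcnonpos i; dsimp only; linarith, (-v) / 2, by linarith, ?_⟩
  intro x hx
  have hsum : ∑ i, (-c i + ε) * x i = (∑ i, (-c i) * x i) + ε * ∑ i, x i := by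
    rw [Finset.mul_sum, ← Finset.sum_add_distrib]
    exact Finset.sum_congr rfl fun i _ => by ring
  rw [hsum]
  have h1 := hK0 x hx
  have h2 : -D ≤ ∑ i, x i := by
    have : ∑ i, x i ≥ ∑ _i : Fin d, (-r) := by
      apply Finset.sum_le_sum
      intro i _
      have := hbound x hx i
      exact neg_le_of_abs_le this
    simp only [Finset.sum_const, Finset.card_univ, Fintype.card_fin, nsmul_eq_mul] at this
    rw [hD]
    linarith
  have h3 : ε * (-(D)) ≤ ε * ∑ i, x i :=
    mul_le_mul_of_nonneg_left (by linarith) hεpos.le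
  have h4 : ε * (D + 1) = (-v) / 2 := by
    rw [hε]
    field_simp
  nlinarith [hεpos.le]
end

section
/- Let r > 0, let μ be a Borel probability measure on the interval [−r,0], and let G : [−r,∞) → [0,∞) be measurable and locally integrable. Then for every t ≥ r, ∫_0^t (∫_{[−r,0]} G(s+u) dμ(u)) ds ≤ ∫_0^r (∫_{[−r,0]} G(s+u) dμ(u)) ds + ∫_0^t G(s) ds. -/
open MeasureTheory

lemma aux_prod_integrable (r : ℝ) (μ : Measure ℝ) [IsProbabilityMeasure μ]
    (hμ : μ (Set.Icc (-r) 0)ᶜ = 0)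
    (G : ℝ → ℝ) (hGm : Measurable G)
    (hGloc : LocallyIntegrableOn G (Set.Ici (-r)))
    (a b : ℝ) (ha : 0 ≤ a) :
    Integrable (fun p : ℝ × ℝ => G (p.1 + p.2))
      ((volume.restrict (Set.Ioc a b)).prod μ) := by
  have hmeas : Measurable fun p : ℝ × ℝ => G (p.1 + p.2) :=
    hGm.comp (measurable_fst.add measurable_snd)
  have hae : ∀ᵐ u ∂μ, u ∈ Set.Icc (-r) 0 := by
    exact (ae_iff).2 hμ
  have hIcc : IntegrableOn G (Set.Icc (-r) b) volume :=
    hGloc.integrableOn_compact_subset Set.Icc_subset_Ici_self isCompact_Icc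
  have hCfin : (∫⁻ x in Set.Icc (-r) b, ‖G x‖₊ ∂volume) < ⊤ := hIcc.2
  refine ⟨hmeas.aestronglyMeasurable, ?_⟩
  rw [HasFiniteIntegral, lintegral_prod_symm _ (hmeas.enorm.aemeasurable)]
  have key : ∀ᵐ u ∂μ, (∫⁻ s in Set.Ioc a b, ‖G (s + u)‖₊ ∂volume)
      ≤ ∫⁻ x in Set.Icc (-r) b, ‖G x‖₊ ∂volume := by
    filter_upwards [hae] with u hu
    have h1 : (∫⁻ s in Set.Ioc a b, ‖G (s + u)‖₊ ∂volume)
        ≤ ∫⁻ s, (Set.Icc (-r) b).indicator (fun x => (‖G x‖₊ : ENNReal)) (s + u) ∂volume := by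
      refine le_trans (setLIntegral_mono' measurableSet_Ioc ?_) (setLIntegral_le_lintegral _ _)
      intro s hs
      have hmem : s + u ∈ Set.Icc (-r) b := by
        constructor
        · nlinarith [hs.1, hu.1]
        · nlinarith [hs.2, hu.2]
      rw [Set.indicator_of_mem hmem]
    calc (∫⁻ s in Set.Ioc a b, ‖G (s + u)‖₊ ∂volume)
        ≤ ∫⁻ s, (Set.Icc (-r) b).indicator (fun x => (‖G x‖₊ : ENNReal)) (s + u) ∂volume := h1
      _ = ∫⁻ s, (Set.Icc (-r) b).indicator (fun x => (‖G x‖₊ : ENNReal)) s ∂volume :=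
          lintegral_add_right_eq_self _ u
      _ = ∫⁻ x in Set.Icc (-r) b, ‖G x‖₊ ∂volume :=
          (lintegral_indicator measurableSet_Icc _)
  calc (∫⁻ u, ∫⁻ s in Set.Ioc a b, ‖G (s + u)‖₊ ∂volume ∂μ)
      ≤ ∫⁻ _, (∫⁻ x in Set.Icc (-r) b, ‖G x‖₊ ∂volume) ∂μ := lintegral_mono_ae key
    _ = ∫⁻ x in Set.Icc (-r) b, ‖G x‖₊ ∂volume := by simp
    _ < ⊤ := hCfin

/-- For a probability measure `μ` on `[-r, 0]` and a nonnegative locally integrable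
function `G` on `[-r, ∞)`, the delayed time-average is bounded by the undelayed one:
`∫_0^t ∫ G(s+u) dμ(u) ds ≤ ∫_0^r ∫ G(s+u) dμ(u) ds + ∫_0^t G(s) ds` for `t ≥ r`. -/
theorem stmt_1 (r : ℝ) (hr : 0 < r) (μ : Measure ℝ) [IsProbabilityMeasure μ]
    (hμ : μ (Set.Icc (-r) 0)ᶜ = 0)
    (G : ℝ → ℝ) (hGm : Measurable G) (hGnn : ∀ x, -r ≤ x → 0 ≤ G x)
    (hGloc : LocallyIntegrableOn G (Set.Ici (-r)))
    (t : ℝ) (ht : r ≤ t) :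
    (∫ s in (0:ℝ)..t, ∫ u, G (s + u) ∂μ) ≤
      (∫ s in (0:ℝ)..r, ∫ u, G (s + u) ∂μ) + ∫ s in (0:ℝ)..t, G s := by
  have h0t := aux_prod_integrable r μ hμ G hGm hGloc 0 t le_rfl
  have hrt := aux_prod_integrable r μ hμ G hGm hGloc r t hr.le
  have hae : ∀ᵐ u ∂μ, u ∈ Set.Icc (-r) 0 := by
    exact (ae_iff).2 hμ
  set f : ℝ → ℝ := fun s => ∫ u, G (s + u) ∂μ with hf
  have hfint : IntegrableOn f (Set.Ioc 0 t) volume := h0t.integral_prod_left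
  have h0r : IntervalIntegrable f volume 0 r := by
    rw [intervalIntegrable_iff_integrableOn_Ioc_of_le hr.le]
    exact hfint.mono_set (Set.Ioc_subset_Ioc_right ht)
  have hrt' : IntervalIntegrable f volume r t := by
    rw [intervalIntegrable_iff_integrableOn_Ioc_of_le ht]
    exact hfint.mono_set (Set.Ioc_subset_Ioc_left hr.le)
  rw [← intervalIntegral.integral_add_adjacent_intervals h0r hrt']
  refine add_le_add le_rfl ?_
  -- Now show ∫ s in r..t, f s ≤ ∫ s in 0..t, G s
  have hGint0t : IntegrableOn G (Set.Ioc 0 t) volume := by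
    refine (hGloc.integrableOn_compact_subset ?_ isCompact_Icc).mono_set
      Set.Ioc_subset_Icc_self (t := Set.Icc 0 t)
    intro x hx
    have : (0:ℝ) ≤ x := hx.1
    simp only [Set.mem_Ici]; linarith [hr]
  have hswap : (∫ s in Set.Ioc r t, f s ∂volume)
      = ∫ u, ∫ s in Set.Ioc r t, G (s + u) ∂volume ∂μ :=
    integral_integral_swap (f := fun s u => G (s + u)) hrt
  have hinner : Integrable (fun u => ∫ s in Set.Ioc r t, G (s + u) ∂volume) μ :=
    hrt.integral_prod_right
  have hbound : ∀ᵐ u ∂μ, (∫ s in Set.Ioc r t, G (s + u) ∂volume)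
      ≤ ∫ s in Set.Ioc 0 t, G s ∂volume := by
    filter_upwards [hae] with u hu
    have htrans : (∫ s in Set.Ioc r t, G (s + u) ∂volume)
        = ∫ s in Set.Ioc (r + u) (t + u), G s ∂volume := by
      rw [← intervalIntegral.integral_of_le ht, ← intervalIntegral.integral_of_le (by linarith)]
      exact intervalIntegral.integral_comp_add_right (fun s => G s) u
    rw [htrans]
    refine setIntegral_mono_set hGint0t ?_ ?_
    · refine (ae_restrict_iff' measurableSet_Ioc).2 (Filter.Eventually.of_forall ?_)
      intro x hx
      exact hGnn x (by linarith [hx.1])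
    · refine Filter.Eventually.of_forall ?_
      intro x hx
      exact ⟨by linarith [hx.1, hu.1], by linarith [hx.2, hu.2]⟩
  have hmain : (∫ s in Set.Ioc r t, f s ∂volume) ≤ ∫ s in Set.Ioc 0 t, G s ∂volume := by
    rw [hswap]
    calc (∫ u, ∫ s in Set.Ioc r t, G (s + u) ∂volume ∂μ)
        ≤ ∫ _, (∫ s in Set.Ioc 0 t, G s ∂volume) ∂μ :=
          integral_mono_ae hinner (integrable_const _) hbound
      _ = ∫ s in Set.Ioc 0 t, G s ∂volume := by simp
  rw [intervalIntegral.integral_of_le ht, intervalIntegral.integral_of_le (hr.le.trans ht)]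
  exact hmain
end

section
/- Let (Ω, F, P) be a probability space with a filtration (F_k)_{k∈ℕ}, let q ∈ (0,1) and m > 0, and let (Z_k)_{k∈ℕ} be a nonnegative integrable adapted process with Z_0 = z almost surely for a constant z ∈ [0,m). Define the stopping time β := inf{k ∈ ℕ : Z_k ≥ m}. Assume that for every k, almost surely on the event {β > k}, E[Z_{k+1} | F_k] ≤ q Z_k. Then E[1_{β>k} Z_k] ≤ q^k z for every k, and P(β < ∞) ≤ q z / ((1−q) m); in particular P(Z_k < m for all k ∈ ℕ) ≥ 1 − q z / ((1−q) m). -/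
open MeasureTheory Filter

set_option maxHeartbeats 1000000 in
/-- Discrete-time contraction/hitting-time estimate: if a nonnegative adapted process
`Z` starts at `z < m` and satisfies `E[Z_{k+1} | F_k] ≤ q Z_k` on the event that `Z` has
stayed below `m` up to time `k`, then `E[1_{β>k} Z_k] ≤ q^k z` where `β` is the hitting
time of `[m, ∞)`, `P(β < ∞) ≤ q z/((1-q) m)`, and
`P(Z_k < m for all k) ≥ 1 - q z/((1-q) m)`. -/
theorem stmt_8 {Ω : Type*} {m0 : MeasurableSpace Ω} {P : Measure Ω} [IsProbabilityMeasure P]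
    (ℱ : Filtration ℕ m0) (q m z : ℝ) (hq : q ∈ Set.Ioo (0:ℝ) 1) (hm : 0 < m)
    (hz : 0 ≤ z) (hzm : z < m)
    (Z : ℕ → Ω → ℝ) (hadapt : Adapted ℱ Z) (hint : ∀ k, Integrable (Z k) P)
    (hnn : ∀ k, ∀ᵐ ω ∂P, 0 ≤ Z k ω)
    (hZ0 : ∀ᵐ ω ∂P, Z 0 ω = z)
    (hcontr : ∀ k, ∀ᵐ ω ∂P, (∀ j ≤ k, Z j ω < m) → (P[Z (k + 1)|ℱ k]) ω ≤ q * Z k ω) :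
    (∀ k, (∫ ω in {ω | ∀ j ≤ k, Z j ω < m}, Z k ω ∂P) ≤ q ^ k * z) ∧
      (P {ω | ∃ k, m ≤ Z k ω}).toReal ≤ q * z / ((1 - q) * m) ∧
      1 - q * z / ((1 - q) * m) ≤ (P {ω | ∀ k, Z k ω < m}).toReal := by
  obtain ⟨hq0, hq1⟩ := hq
  set A : ℕ → Set Ω := fun k => {ω | ∀ j ≤ k, Z j ω < m} with hA
  have hZmeas : ∀ k, Measurable (Z k) := fun k => (hadapt k).mono (ℱ.le k) le_rfl
  have hAmeas : ∀ k, MeasurableSet[ℱ k] (A k) := by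
    intro k
    have hEq : A k = ⋂ j ∈ Set.Iic k, {ω | Z j ω < m} := by
      ext ω; simp [hA, Set.mem_iInter]
    rw [hEq]
    refine MeasurableSet.biInter (Set.to_countable _) (fun j hj => ?_)
    exact ((hadapt j).mono (ℱ.mono hj) le_rfl) measurableSet_Iio
  have hAmeas0 : ∀ k, MeasurableSet (A k) := fun k => ℱ.le k _ (hAmeas k)
  -- contraction step
  have key : ∀ k, (∫ ω in A k, Z (k+1) ω ∂P) ≤ q * ∫ ω in A k, Z k ω ∂P := by
    intro k
    have h1 : (∫ ω in A k, Z (k+1) ω ∂P) = ∫ ω in A k, (P[Z (k+1)|ℱ k]) ω ∂P :=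
      (setIntegral_condExp (ℱ.le k) (hint (k+1)) (hAmeas k)).symm
    rw [h1]
    have h2 : (∫ ω in A k, (P[Z (k+1)|ℱ k]) ω ∂P) ≤ ∫ ω in A k, q * Z k ω ∂P := by
      refine setIntegral_mono_ae_restrict integrable_condExp.integrableOn
        ((hint k).const_mul q).integrableOn ?_
      filter_upwards [ae_restrict_of_ae (hcontr k), ae_restrict_mem (hAmeas0 k)] with ω h hω
      exact h hω
    calc (∫ ω in A k, (P[Z (k+1)|ℱ k]) ω ∂P) ≤ ∫ ω in A k, q * Z k ω ∂P := h2
      _ = q * ∫ ω in A k, Z k ω ∂P := by rw [integral_const_mul]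
  have hsub : ∀ k, A (k+1) ⊆ A k := fun k ω h j hj => h j (hj.trans (Nat.le_succ k))
  have main : ∀ k, (∫ ω in A k, Z k ω ∂P) ≤ q ^ k * z := by
    intro k
    induction k with
    | zero =>
      have h0 : (∫ ω in A 0, Z 0 ω ∂P) = ∫ ω in A 0, z ∂P := by
        refine setIntegral_congr_ae (hAmeas0 0) ?_
        filter_upwards [hZ0] with ω h _ using h
      rw [h0, setIntegral_const, smul_eq_mul, pow_zero, one_mul]
      have hle1 : (P (A 0)).toReal ≤ 1 := ENNReal.toReal_le_of_le_ofReal zero_le_one (by simpa using prob_le_one)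
      exact mul_le_of_le_one_left hz hle1
    | succ k ih =>
      have hstep : (∫ ω in A (k+1), Z (k+1) ω ∂P) ≤ ∫ ω in A k, Z (k+1) ω ∂P :=
        setIntegral_mono_set (hint (k+1)).integrableOn
          (ae_restrict_of_ae (hnn (k+1))) ((hsub k).eventuallyLE)
      calc (∫ ω in A (k+1), Z (k+1) ω ∂P) ≤ ∫ ω in A k, Z (k+1) ω ∂P := hstep
        _ ≤ q * ∫ ω in A k, Z k ω ∂P := key k
        _ ≤ q * (q ^ k * z) := by gcongr
        _ = q ^ (k+1) * z := by ring
  have ext_bound : ∀ k, (∫ ω in A k, Z (k+1) ω ∂P) ≤ q ^ (k+1) * z := by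
    intro k
    calc (∫ ω in A k, Z (k+1) ω ∂P) ≤ q * ∫ ω in A k, Z k ω ∂P := key k
      _ ≤ q * (q ^ k * z) := by gcongr; exact main k
      _ = q ^ (k+1) * z := by ring
  refine ⟨main, ?_⟩
  -- first-hitting decomposition
  set C : ℕ → Set Ω := fun k => {ω | m ≤ Z k ω ∧ ∀ j < k, Z j ω < m} with hC
  have hCmeas : ∀ k, MeasurableSet (C k) := by
    intro k
    have hEq : C k = {ω | m ≤ Z k ω} ∩ ⋂ j ∈ Set.Iio k, {ω | Z j ω < m} := by
      ext ω; simp [hC]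
    rw [hEq]
    exact MeasurableSet.inter ((hZmeas k) measurableSet_Ici)
      (MeasurableSet.biInter (Set.to_countable _)
        (fun j _ => (hZmeas j) measurableSet_Iio))
  set U : Set Ω := {ω | ∃ k, m ≤ Z k ω} with hUdef
  have hUmeas : MeasurableSet U := by
    have hEq : U = ⋃ k, {ω | m ≤ Z k ω} := by ext ω; simp [hUdef]
    rw [hEq]
    exact MeasurableSet.iUnion (fun k => (hZmeas k) measurableSet_Ici)
  have hUsub : U ⊆ ⋃ k, C k := by
    intro ω hω
    have h : ∃ k, m ≤ Z k ω := hω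
    exact Set.mem_iUnion.2 ⟨Nat.find h, Nat.find_spec h,
      fun j hj => not_le.1 (Nat.find_min h hj)⟩
  have hC0 : P (C 0) = 0 := by
    refine measure_mono_null (fun ω h => h.1 : C 0 ⊆ {ω | m ≤ Z 0 ω}) ?_
    have hae : ∀ᵐ ω ∂P, ω ∉ {ω | m ≤ Z 0 ω} := by
      filter_upwards [hZ0] with ω h
      simp only [Set.mem_setOf_eq, not_le, h]
      exact hzm
    have := ae_iff.mp hae
    simp only [not_not, Set.setOf_mem_eq] at this
    exact this
  have hCbound : ∀ k, P (C (k+1)) ≤ ENNReal.ofReal ((q * z / m) * q ^ k) := by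
    intro k
    have hCsub : C (k+1) ⊆ A k := fun ω h j hj => h.2 j (Nat.lt_succ_of_le hj)
    have markov : m * (P (C (k+1))).toReal ≤ ∫ ω in C (k+1), Z (k+1) ω ∂P := by
      have h1 : (∫ _ω in C (k+1), m ∂P) ≤ ∫ ω in C (k+1), Z (k+1) ω ∂P := by
        refine setIntegral_mono_ae_restrict (integrableOn_const (measure_ne_top _ _) enorm_ne_top)
          (hint (k+1)).integrableOn ?_
        filter_upwards [ae_restrict_mem (hCmeas (k+1))] with ω hω
        exact hω.1
      simpa [setIntegral_const, smul_eq_mul, mul_comm, measureReal_def] using h1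
    have h2 : (∫ ω in C (k+1), Z (k+1) ω ∂P) ≤ ∫ ω in A k, Z (k+1) ω ∂P :=
      setIntegral_mono_set (hint (k+1)).integrableOn
        (ae_restrict_of_ae (hnn (k+1))) (hCsub.eventuallyLE)
    have h3 : m * (P (C (k+1))).toReal ≤ q ^ (k+1) * z :=
      markov.trans (h2.trans (ext_bound k))
    have h4 : (P (C (k+1))).toReal ≤ (q * z / m) * q ^ k := by
      rw [div_mul_eq_mul_div, le_div_iff₀ hm]
      rw [pow_succ] at h3
      nlinarith [h3]
    calc P (C (k+1)) = ENNReal.ofReal (P (C (k+1))).toReal :=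
          (ENNReal.ofReal_toReal (measure_ne_top P _)).symm
      _ ≤ _ := ENNReal.ofReal_le_ofReal h4
  have hsummable : Summable (fun k : ℕ => (q * z / m) * q ^ k) :=
    (summable_geometric_of_lt_one hq0.le hq1).mul_left _
  have htsum : (∑' k : ℕ, (q * z / m) * q ^ k) = q * z / ((1 - q) * m) := by
    rw [tsum_mul_left, tsum_geometric_of_lt_one hq0.le hq1]
    field_simp
  have hbound_nonneg : 0 ≤ q * z / ((1 - q) * m) :=
    div_nonneg (mul_nonneg hq0.le hz) (mul_nonneg (by linarith) hm.le)
  have hofReal : (∑' k : ℕ, ENNReal.ofReal ((q * z / m) * q ^ k))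
      = ENNReal.ofReal (q * z / ((1 - q) * m)) := by
    rw [← ENNReal.ofReal_tsum_of_nonneg
      (fun k => mul_nonneg (div_nonneg (mul_nonneg hq0.le hz) hm.le) (pow_nonneg hq0.le k))
      hsummable, htsum]
  have hPU : (P U).toReal ≤ q * z / ((1 - q) * m) := by
    refine ENNReal.toReal_le_of_le_ofReal hbound_nonneg ?_
    calc P U ≤ P (⋃ k, C k) := measure_mono hUsub
      _ ≤ ∑' k, P (C k) := measure_iUnion_le _
      _ = P (C 0) + ∑' k, P (C (k+1)) := tsum_eq_zero_add' ENNReal.summable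
      _ = ∑' k, P (C (k+1)) := by rw [hC0, zero_add]
      _ ≤ ∑' k, ENNReal.ofReal ((q * z / m) * q ^ k) := ENNReal.tsum_le_tsum hCbound
      _ = ENNReal.ofReal (q * z / ((1 - q) * m)) := hofReal
  refine ⟨hPU, ?_⟩
  have hcompl : {ω | ∀ k, Z k ω < m} = Uᶜ := by
    ext ω; simp [hUdef, not_le]
  rw [hcompl, prob_compl_eq_one_sub hUmeas,
    ENNReal.toReal_sub_of_le prob_le_one ENNReal.one_ne_top, ENNReal.toReal_one]
  linarith
end
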